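/- Let A and C be Lie subalgebras of a Lie algebra L over a field 𝔽. If C is a Lie ideal of the Lie subalgebra ⟨A ∪ C⟩ generated by A ∪ C, then ⟨A ∪ C⟩ = span_𝔽(A ∪ C), the 𝔽-linear span of A ∪ C. -/

import Mathlib

universe u v

/-- `C` is an ideal of the Lie subalgebra `S`: `C ≤ S` and `⁅S, C⁆ ⊆ C`. -/
def IsIdealIn {𝔽 : Type u} [Field 𝔽] {L : Type v} [LieRing L] [LieAlgebra 𝔽 L]
    (C S : LieSubalgebra 𝔽 L) : Prop :=
  C ≤ S ∧ ∀ x ∈ C, ∀ y ∈ S, ⁅y, x⁆ ∈ C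

/-- If `A` and `C` are Lie subalgebras of `L` and `C` is a Lie ideal of the subalgebra
`⟨A ∪ C⟩`, then `⟨A ∪ C⟩ = span_𝔽(A ∪ C)`. -/
theorem lieSpan_eq_span_of_ideal
    (𝔽 : Type u) [Field 𝔽] (L : Type v) [LieRing L] [LieAlgebra 𝔽 L]
    (A C : LieSubalgebra 𝔽 L)
    (hC : IsIdealIn C (LieSubalgebra.lieSpan 𝔽 L ((A : Set L) ∪ (C : Set L)))) :
    (LieSubalgebra.lieSpan 𝔽 L ((A : Set L) ∪ (C : Set L)) : Set L)
      = (Submodule.span 𝔽 ((A : Set L) ∪ (C : Set L)) : Set L) := by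
  set S := LieSubalgebra.lieSpan 𝔽 L ((A : Set L) ∪ (C : Set L)) with hS
  have hspan : Submodule.span 𝔽 ((A : Set L) ∪ (C : Set L))
      = A.toSubmodule ⊔ C.toSubmodule := by
    rw [Submodule.span_union, ← LieSubalgebra.coe_toSubmodule A,
      ← LieSubalgebra.coe_toSubmodule C, Submodule.span_eq, Submodule.span_eq]
  have hAle : (A : Set L) ⊆ (S : Set L) :=
    Set.Subset.trans Set.subset_union_left (LieSubalgebra.subset_lieSpan)
  -- key: the span is closed under bracket
  have key : ∀ x y : L, x ∈ Submodule.span 𝔽 ((A : Set L) ∪ (C : Set L)) →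
      y ∈ Submodule.span 𝔽 ((A : Set L) ∪ (C : Set L)) →
      ⁅x, y⁆ ∈ Submodule.span 𝔽 ((A : Set L) ∪ (C : Set L)) := by
    intro x y hx hy
    rw [hspan] at hx hy ⊢
    obtain ⟨a, ha, c, hc, rfl⟩ := Submodule.mem_sup.mp hx
    obtain ⟨a', ha', c', hc', rfl⟩ := Submodule.mem_sup.mp hy
    have hbr : ∀ u v : L, u ∈ A → v ∈ C → ⁅u, v⁆ ∈ C := fun u v hu hv =>
      hC.2 v hv u (hAle hu)
    have h1 : ⁅a, a'⁆ ∈ A.toSubmodule := A.lie_mem ha ha'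
    have h2 : ⁅a, c'⁆ ∈ C.toSubmodule := hbr a c' ha hc'
    have h3 : ⁅c, a'⁆ ∈ C.toSubmodule := by
      rw [← lie_skew]; exact neg_mem (hbr a' c ha' hc)
    have h4 : ⁅c, c'⁆ ∈ C.toSubmodule := C.lie_mem hc hc'
    have : ⁅a + c, a' + c'⁆ = ⁅a, a'⁆ + ⁅a, c'⁆ + (⁅c, a'⁆ + ⁅c, c'⁆) := by
      rw [lie_add, add_lie, add_lie]; abel
    rw [this]
    exact add_mem (add_mem (Submodule.mem_sup_left h1) (Submodule.mem_sup_right h2))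
      (add_mem (Submodule.mem_sup_right h3) (Submodule.mem_sup_right h4))
  let K : LieSubalgebra 𝔽 L :=
    { Submodule.span 𝔽 ((A : Set L) ∪ (C : Set L)) with
      lie_mem' := fun hx hy => key _ _ hx hy }
  apply Set.Subset.antisymm
  · have : S ≤ K := LieSubalgebra.lieSpan_le.mpr (Submodule.subset_span)
    exact this
  · exact fun x hx => Submodule.span_le.mpr LieSubalgebra.subset_lieSpan hx
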